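/- Let ℓ be a prime number and T a nonzero commutative ℤ_ℓ-algebra which is free and finitely generated as a ℤ_ℓ-module, where ℤ_ℓ denotes the ring of ℓ-adic integers. Then a prime ideal 𝔭 of T is a minimal prime of T if and only if ℓ·1_T ∉ 𝔭, where ℓ·1_T is the image of ℓ under the structure map ℤ_ℓ → T. Consequently, the minimal primes of T are in bijection with the prime ideals of the localization T[1/ℓ] of T away from ℓ, via contraction along the localization map T → T[1/ℓ]. -/

import Mathlib

/-- Elements of a minimal prime are zerodivisors. -/
lemma aux_minimal_nonZeroDivisor {R : Type*} [CommRing R] {p : Ideal R}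
    (hp : p ∈ minimalPrimes R) {x : R} (hx : x ∈ nonZeroDivisors R) : x ∉ p := by
  intro hxp
  haveI hpp : p.IsPrime := hp.1.1
  set S := Localization.AtPrime p
  have hmax : ∀ q : Ideal S, q.IsPrime → IsLocalRing.maximalIdeal S ≤ q := by
    intro q hq
    have hcom : (q.comap (algebraMap R S)).IsPrime := hq.comap _
    have hle : q.comap (algebraMap R S) ≤ p := by
      intro y hy
      by_contra hyp
      have : IsUnit (algebraMap R S y) := IsLocalization.map_units S (⟨y, hyp⟩ : p.primeCompl)
      exact hq.1 (q.eq_top_of_isUnit_mem hy this)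
    have := hp.2 ⟨hcom, bot_le⟩ hle
    rw [← Localization.AtPrime.map_eq_maximalIdeal]
    exact Ideal.map_le_iff_le_comap.mpr this
  have hnil : algebraMap R S x ∈ nilradical S := by
    rw [nilradical_eq_sInf]
    refine Ideal.mem_sInf.mpr fun {q} hq => hmax q hq ?_
    rw [← Localization.AtPrime.map_eq_maximalIdeal]
    exact Ideal.mem_map_of_mem _ hxp
  obtain ⟨n, hn⟩ := hnil
  rw [← map_pow] at hn
  obtain ⟨m, hm⟩ := (IsLocalization.map_eq_zero_iff p.primeCompl S _).mp hn
  have hxn : (x ^ n : R) ∈ nonZeroDivisors R := pow_mem hx n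
  have : (m : R) = 0 := (mul_right_mem_nonZeroDivisors_eq_zero_iff hxn).mp hm
  exact m.2 (this ▸ p.zero_mem)

/-- In a nonzero commutative `ℤ_ℓ`-algebra `T`, free and finitely generated as a
`ℤ_ℓ`-module, a prime ideal is a minimal prime iff it does not contain `ℓ·1_T`;
consequently contraction along `T → T[1/ℓ]` is a bijection from the prime ideals of
`T[1/ℓ]` onto the minimal primes of `T`. -/
theorem minimal_primes_iff_ell_not_mem {ℓ : ℕ} [Fact ℓ.Prime]
    {T : Type*} [CommRing T] [Nontrivial T] [Algebra ℤ_[ℓ] T]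
    [Module.Free ℤ_[ℓ] T] [Module.Finite ℤ_[ℓ] T] :
    (∀ 𝔭 : Ideal T, 𝔭.IsPrime →
      (𝔭 ∈ minimalPrimes T ↔ algebraMap ℤ_[ℓ] T (ℓ : ℤ_[ℓ]) ∉ 𝔭)) ∧
    Set.BijOn
      (fun q : Ideal (Localization.Away (algebraMap ℤ_[ℓ] T (ℓ : ℤ_[ℓ]))) =>
        Ideal.comap
          (algebraMap T (Localization.Away (algebraMap ℤ_[ℓ] T (ℓ : ℤ_[ℓ])))) q)
      {q | q.IsPrime} (minimalPrimes T) := by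
  set t : T := algebraMap ℤ_[ℓ] T (ℓ : ℤ_[ℓ]) with ht
  -- `t` is a nonzerodivisor since `T` is free over the domain `ℤ_ℓ`
  have hℓ0 : ((ℓ : ℤ_[ℓ])) ≠ 0 := Nat.cast_ne_zero.mpr (Fact.out (p := ℓ.Prime)).ne_zero
  have htnzd : t ∈ nonZeroDivisors T := by
    rw [mem_nonZeroDivisors_iff_right]
    intro x hx
    have : (ℓ : ℤ_[ℓ]) • x = 0 := by rwa [Algebra.smul_def, mul_comm]
    exact (smul_eq_zero.mp this).resolve_left hℓ0
  -- a prime of `T` avoiding `t` contracts to `⊥` in `ℤ_ℓ`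
  have key : ∀ P : Ideal T, P.IsPrime → t ∉ P →
      P.comap (algebraMap ℤ_[ℓ] T) = ⊥ := by
    intro P hP htP
    by_contra hb
    haveI := hP.comap (algebraMap ℤ_[ℓ] T)
    have hmax := IsPrime.to_maximal_ideal hb
    have : (ℓ : ℤ_[ℓ]) ∈ P.comap (algebraMap ℤ_[ℓ] T) := by
      rw [IsLocalRing.eq_maximalIdeal hmax, PadicInt.maximalIdeal_eq_span_p]
      exact Ideal.mem_span_singleton_self _
    exact htP this
  -- Part 1
  have part1 : ∀ 𝔭 : Ideal T, 𝔭.IsPrime → (𝔭 ∈ minimalPrimes T ↔ t ∉ 𝔭) := by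
    intro 𝔭 h𝔭
    constructor
    · intro hmin
      exact aux_minimal_nonZeroDivisor hmin htnzd
    · intro ht𝔭
      refine ⟨⟨h𝔭, bot_le⟩, ?_⟩
      rintro q ⟨hq, -⟩ hle
      by_contra hnle
      obtain ⟨x, hx𝔭, hxq⟩ := Set.not_subset.mp hnle
      haveI : q.IsPrime := hq
      have hlt := Ideal.comap_lt_comap_of_integral_mem_sdiff (R := ℤ_[ℓ]) hle
        ⟨hx𝔭, hxq⟩ (Algebra.IsIntegral.isIntegral x)
      have htq : t ∉ q := fun h => ht𝔭 (hle h)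
      rw [key q hq htq, key 𝔭 h𝔭 ht𝔭] at hlt
      exact lt_irrefl _ hlt
  refine ⟨part1, ?_, ?_, ?_⟩
  · -- MapsTo
    intro q hq
    haveI : q.IsPrime := hq
    have hcom : (Ideal.comap (algebraMap T (Localization.Away t)) q).IsPrime :=
      Ideal.IsPrime.comap _
    refine (part1 _ hcom).mpr ?_
    intro htc
    have hu : IsUnit (algebraMap T (Localization.Away t) t) :=
      IsLocalization.map_units (M := Submonoid.powers t) _ ⟨t, Submonoid.mem_powers t⟩
    exact ‹q.IsPrime›.1 (q.eq_top_of_isUnit_mem htc hu)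
  · -- InjOn
    intro q1 hq1 q2 hq2 h
    have := congrArg (Ideal.map (algebraMap T (Localization.Away t))) h
    rwa [IsLocalization.map_comap (Submonoid.powers t) _ q1,
      IsLocalization.map_comap (Submonoid.powers t) _ q2] at this
  · -- SurjOn
    intro p hp
    haveI hpp : p.IsPrime := hp.1.1
    have htp : t ∉ p := (part1 p hpp).mp hp
    have hd : Disjoint ((Submonoid.powers t : Submonoid T) : Set T) (p : Set T) := by
      rw [Set.disjoint_left]
      rintro a ⟨n, rfl⟩ hap
      exact htp (hpp.mem_of_pow_mem n hap)
    refine ⟨Ideal.map (algebraMap T (Localization.Away t)) p, ?_, ?_⟩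
    · exact IsLocalization.isPrime_of_isPrime_disjoint (Submonoid.powers t) _ p hpp hd
    · exact IsLocalization.under_map_of_isPrime_disjoint (Submonoid.powers t) _ hpp hd
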